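/- Let M be a q×q mixed invertible integer matrix. A formal power series solution of I(M) supported on finitely many monomials (i.e., a polynomial solution) has support contained in a union of bounded M-subgraphs, and the polynomial solutions G_γ for γ ranging over representatives of the bounded M-subgraphs form a basis of the space of polynomial solutions of I(M). In particular, the dimension of the space of polynomial solutions of I(M) equals the number of bounded M-subgraphs of ℕ^q. -/

import Mathlib

/-- For a `q×q` mixed invertible integer matrix `M`: any
polynomial (finitely supported) solution of `I(M)` is supported on bounded
`M`-subgraphs, and the polynomial solutions `G_γ`, for `γ` ranging over
representatives of bounded `M`-subgraphs, form a basis of the space of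
polynomial solutions — i.e. every finitely supported assignment on bounded
representatives extends to a unique polynomial solution; so the dimension of
the polynomial solution space equals the number of bounded `M`-subgraphs. -/
theorem polynomial_solutions_basis
    (q : ℕ) (hq : 1 ≤ q) (M : Matrix (Fin q) (Fin q) ℤ)
    (hdet : M.det ≠ 0)
    (hmix : ∀ k, (∃ i, 0 < M i k) ∧ (∃ i, M i k < 0))
    (R : Set (Fin q → ℕ)) :
    let pp : Fin q → Fin q → ℕ := fun k i => (M i k).toNat
    let mm : Fin q → Fin q → ℕ := fun k i => (-(M i k)).toNat
    let adj : (Fin q → ℕ) → (Fin q → ℕ) → Prop := fun u v =>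
      ∃ k : Fin q, (∀ i, (v i : ℤ) = (u i : ℤ) + M i k) ∨
                   (∀ i, (u i : ℤ) = (v i : ℤ) + M i k)
    let IsSol : ((Fin q → ℕ) → ℂ) → Prop := fun c =>
      ∀ (k : Fin q) (u : Fin q → ℕ),
        (∏ i, (((u i + pp k i).factorial / (u i).factorial : ℕ) : ℂ)) *
            c (fun i => u i + pp k i)
          = (∏ i, (((u i + mm k i).factorial / (u i).factorial : ℕ) : ℂ)) *
            c (fun i => u i + mm k i)
    (∀ u : Fin q → ℕ, ∃ r ∈ R, Relation.ReflTransGen adj r u) →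
    (∀ r ∈ R, ∀ r' ∈ R, Relation.ReflTransGen adj r r' → r = r') →
    ((∀ c : (Fin q → ℕ) → ℂ, IsSol c → (Function.support c).Finite →
        ∀ u : Fin q → ℕ, c u ≠ 0 →
          {v : Fin q → ℕ | Relation.ReflTransGen adj u v}.Finite) ∧
     (∀ g : (Fin q → ℕ) → ℂ, (Function.support g).Finite →
        (∀ r : Fin q → ℕ, g r ≠ 0 →
          r ∈ R ∧ {v : Fin q → ℕ | Relation.ReflTransGen adj r v}.Finite) →
        ∃! c : (Fin q → ℕ) → ℂ,
          IsSol c ∧ (Function.support c).Finite ∧ ∀ r ∈ R, c r = g r)) := by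
  intro pp mm adj IsSol hcover huniq
  set F : (Fin q → ℕ) → ℂ := fun u => ∏ i, ((u i).factorial : ℂ) with hFdef
  have hFne : ∀ u, F u ≠ 0 := by
    intro u
    simp only [hFdef]
    exact Finset.prod_ne_zero_iff.mpr fun i _ =>
      Nat.cast_ne_zero.mpr (Nat.factorial_ne_zero _)
  have hprod : ∀ (b p : Fin q → ℕ),
      (∏ i, (((b i + p i).factorial / (b i).factorial : ℕ) : ℂ)) * F b
        = F (fun i => b i + p i) := by
    intro b p
    simp only [hFdef]
    rw [← Finset.prod_mul_distrib]
    exact Finset.prod_congr rfl fun i _ => by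
      rw [← Nat.cast_mul,
        Nat.div_mul_cancel (Nat.factorial_dvd_factorial (Nat.le_add_right _ _))]
  have hsymm : Symmetric adj := by
    rintro u v ⟨k, h | h⟩
    · exact ⟨k, Or.inr h⟩
    · exact ⟨k, Or.inl h⟩
  have hkey : ∀ c, IsSol c → ∀ (k : Fin q) (u v : Fin q → ℕ),
      (∀ i, (v i : ℤ) = (u i : ℤ) + M i k) → c u * F u = c v * F v := by
    intro c hc k u v h
    set b : Fin q → ℕ := fun i => min (u i) (v i) with hb
    have hbv : (fun i => b i + pp k i) = v := by
      funext i; have := h i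
      show min (u i) (v i) + (M i k).toNat = v i
      omega
    have hbu : (fun i => b i + mm k i) = u := by
      funext i; have := h i
      show min (u i) (v i) + (-(M i k)).toNat = u i
      omega
    have hthis := hc k b
    rw [hbv, hbu] at hthis
    have hA := hprod b (pp k); rw [hbv] at hA
    have hB := hprod b (mm k); rw [hbu] at hB
    linear_combination (-(F b)) * hthis + c v * hA - c u * hB
  have hRTG : ∀ c, IsSol c → ∀ u v, Relation.ReflTransGen adj u v →
      c u * F u = c v * F v := by
    intro c hc u v h
    induction h with
    | refl => rfl
    | tail _ hbc ih =>
        rcases hbc with ⟨k, h | h⟩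
        · exact ih.trans (hkey c hc k _ _ h)
        · exact ih.trans (hkey c hc k _ _ h).symm
  constructor
  · intro c hsol hfin u hu
    apply hfin.subset
    intro v hv
    simp only [Function.mem_support]
    intro h0
    apply hu
    have h1 := hRTG c hsol u v hv
    rw [h0, zero_mul] at h1
    exact (mul_eq_zero.mp h1).resolve_right (hFne u)
  · intro g hgfin hgR
    choose rep hrepR hrepRTG using hcover
    have hsymmRTG : Symmetric (Relation.ReflTransGen adj) :=
      fun a b h => (@Relation.ReflTransGen.symmetric _ adj ⟨fun x y hxy => hsymm hxy⟩).symm a b h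
    have hrepeq : ∀ u v, Relation.ReflTransGen adj u v → rep u = rep v :=
      fun u v h =>
        huniq _ (hrepR u) _ (hrepR v)
          (((hrepRTG u).trans h).trans (hsymmRTG (hrepRTG v)))
    have hrepself : ∀ r, r ∈ R → rep r = r := fun r hr =>
      huniq _ (hrepR r) r hr (hrepRTG r)
    refine ⟨fun u => g (rep u) * F (rep u) / F u, ⟨?_, ?_, ?_⟩, ?_⟩
    · intro k u
      have hadj : adj (fun i => u i + mm k i) (fun i => u i + pp k i) :=
        ⟨k, Or.inl fun i => by
          show ((u i + (M i k).toNat : ℕ) : ℤ) = ((u i + (-(M i k)).toNat : ℕ) : ℤ) + M i k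
          push_cast; omega⟩
      have hre : rep (fun i => u i + mm k i) = rep (fun i => u i + pp k i) :=
        hrepeq _ _ (Relation.ReflTransGen.single hadj)
      have hA := hprod u (pp k)
      have hB := hprod u (mm k)
      simp only [hre]
      rw [mul_div_assoc', mul_div_assoc', div_eq_div_iff (hFne _) (hFne _)]
      set X := g (rep fun i => u i + pp k i) * F (rep fun i => u i + pp k i)
      linear_combination (X * (∏ i, (((u i + mm k i).factorial / (u i).factorial : ℕ) : ℂ))) * hA
        - (X * (∏ i, (((u i + pp k i).factorial / (u i).factorial : ℕ) : ℂ))) * hB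
    · apply Set.Finite.subset (Set.Finite.biUnion hgfin (fun r hr => (hgR r hr).2))
      intro u hu
      have hgne : g (rep u) ≠ 0 := by
        intro h0
        apply hu
        simp only [Function.mem_support, h0, zero_mul, zero_div, ne_eq,
          not_not]
      exact Set.mem_biUnion hgne (hrepRTG u)
    · intro r hr
      show g (rep r) * F (rep r) / F r = g r
      rw [hrepself r hr, mul_div_assoc, div_self (hFne r), mul_one]
    · rintro c' ⟨hsol, hfin, hcR⟩
      funext u
      have h1 := hRTG c' hsol (rep u) u (hrepRTG u)
      rw [hcR _ (hrepR u)] at h1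
      show c' u = g (rep u) * F (rep u) / F u
      rw [eq_div_iff (hFne u)]
      exact h1.symm
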